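/- Let Γ be a group and let N be a normal subgroup of Γ such that the quotient group Γ/N has bounded finite subgroups (i.e., there exists a constant B such that every finite subgroup of Γ/N has order at most B). Suppose that N is Jordan, i.e., there exists a constant J such that every finite subgroup of N contains a normal abelian subgroup of index at most J. Then Γ is Jordan: there exists a constant J' such that every finite subgroup of Γ contains a normal abelian subgroup of index at most J'. -/

import Mathlib

private lemma isCommutative_of_le' {X : Type*} [Group X] {P Q : Subgroup X} (h : P ≤ Q)
    (hQ : IsMulCommutative Q) : IsMulCommutative P := by
  haveI := hQ
  exact ⟨⟨fun a b => Subtype.ext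
    (Subgroup.mul_comm_of_mem_isMulCommutative (H := Q) (h a.2) (h b.2))⟩⟩

private lemma index_normalCore_le {X : Type*} [Group X] [Finite X] (A : Subgroup X) :
    A.normalCore.index ≤ (A.index).factorial := by
  classical
  rw [Subgroup.normalCore_eq_ker, Subgroup.index_ker]
  have h1 : Nat.card (MulAction.toPermHom X (X ⧸ A)).range ≤
      Nat.card (Equiv.Perm (X ⧸ A)) := Subgroup.card_le_card_group _
  refine h1.trans ?_
  have := Fintype.ofFinite (X ⧸ A)
  rw [Nat.card_eq_fintype_card, Fintype.card_perm, Subgroup.index,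
    Nat.card_eq_fintype_card]

/-- If `N` is a normal subgroup of `Γ` such that `Γ/N` has bounded finite subgroups and `N`
is Jordan, then `Γ` is Jordan. -/
theorem jordan_of_normal_jordan_quotient_bounded
    (Γ : Type*) [Group Γ] (N : Subgroup Γ) (hN : N.Normal)
    (hbound : ∃ B : ℕ, ∀ Q : Subgroup (Γ ⧸ N), Finite Q → Nat.card Q ≤ B)
    (hJordan : ∃ J : ℕ, 0 < J ∧ ∀ G : Subgroup ↥N, Finite G →
      ∃ A : Subgroup ↥G, A.Normal ∧ IsMulCommutative A ∧ A.index ≤ J) :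
    ∃ J' : ℕ, 0 < J' ∧ ∀ G : Subgroup Γ, Finite G →
      ∃ A : Subgroup ↥G, A.Normal ∧ IsMulCommutative A ∧ A.index ≤ J' := by
  obtain ⟨B, hB⟩ := hbound
  obtain ⟨J, hJ0, hJ⟩ := hJordan
  refine ⟨(J * B).factorial, Nat.factorial_pos _, fun G hG => ?_⟩
  haveI : Finite ↥G := hG
  -- the kernel `H` of `G → Γ/N`
  set φ : ↥G →* Γ ⧸ N := (QuotientGroup.mk' N).comp G.subtype with hφ
  set H : Subgroup ↥G := φ.ker with hH
  have hrangefin : Finite φ.range := Set.finite_range φ |>.to_subtype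
  have hHB : H.index ≤ B := by
    rw [hH, Subgroup.index_ker]
    exact hB φ.range hrangefin
  -- `H` maps into `N`
  have hMN : H.map G.subtype ≤ N := by
    rintro x ⟨y, hy, rfl⟩
    have : φ y = 1 := hy
    simpa [hφ, QuotientGroup.eq_one_iff] using this
  set M : Subgroup Γ := H.map G.subtype with hM
  set K : Subgroup ↥N := M.subgroupOf N with hK
  have e : ↥K ≃* ↥H :=
    (Subgroup.subgroupOfEquivOfLe hMN).trans
      (H.equivMapOfInjective G.subtype G.subtype_injective).symm
  haveI : Finite ↥H := Subgroup.instFiniteSubtypeMem H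
  haveI hKfin : Finite ↥K := Finite.of_equiv ↥H e.symm.toEquiv
  obtain ⟨A₀, -, hA₀comm, hA₀idx⟩ := hJ K hKfin
  -- transfer `A₀` to a subgroup `A` of `G`
  set A₂ : Subgroup ↥H := A₀.map e.toMonoidHom with hA₂
  have hA₂idx : A₂.index = A₀.index :=
    Subgroup.index_map_eq _ e.surjective (by
      rw [(MonoidHom.ker_eq_bot_iff (e.toMonoidHom)).2 e.injective]; exact bot_le)
  haveI : IsMulCommutative A₀ := hA₀comm
  haveI hA₂comm : IsMulCommutative A₂ := Subgroup.map_isMulCommutative A₀ e.toMonoidHom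
  set A : Subgroup ↥G := A₂.map H.subtype with hA
  have hAle : A ≤ H := Subgroup.map_subtype_le A₂
  haveI hAcomm : IsMulCommutative A := Subgroup.map_isMulCommutative A₂ H.subtype
  have hrel : A.relIndex H = A₂.index := by
    rw [Subgroup.relIndex, hA, Subgroup.subgroupOf,
      Subgroup.comap_map_eq_self_of_injective H.subtype_injective]
  have hAidx : A.index ≤ J * B := by
    rw [← Subgroup.relIndex_mul_index hAle, hrel, hA₂idx]
    exact Nat.mul_le_mul hA₀idx hHB
  refine ⟨A.normalCore, Subgroup.normalCore_normal A,
    isCommutative_of_le' A.normalCore_le hAcomm, ?_⟩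
  exact (index_normalCore_le A).trans (Nat.factorial_le hAidx)
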